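/- For the algebraic curvature tensor R = R(λ,e,R₀,P,T) of type 𝔤^{1,𝔥} defined as above, the Ricci tensor Ric(U,V) = tr(Z ↦ R(Z,U)V) satisfies: Ric(p,q) = λ, Ric(X,Y) = Ric(R₀)(X,Y) for X,Y ∈ E, Ric(X,q) = g(X, e − R̃ic(P)), and Ric(q,q) = −tr T. -/

import Mathlib

open scoped RealInnerProductSpace BigOperators

noncomputable section

/-- The endomorphism of `ℝ^{1,n+1} = ℝ × ℝⁿ × ℝ` corresponding to `(a, A, X) ∈ 𝔰𝔦𝔪(n)`:
`p ↦ a·p`, `Y ↦ g(X,Y)·p + A·Y`, `q ↦ −X − a·q`. -/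
def simMat (n : ℕ) (a : ℝ) (A : EuclideanSpace ℝ (Fin n) →ₗ[ℝ] EuclideanSpace ℝ (Fin n))
    (Xv : EuclideanSpace ℝ (Fin n)) :
    (ℝ × EuclideanSpace ℝ (Fin n) × ℝ) → (ℝ × EuclideanSpace ℝ (Fin n) × ℝ) :=
  fun v => (a * v.1 + ⟪Xv, v.2.1⟫, A v.2.1 - v.2.2 • Xv, -(a * v.2.2))

/-- The algebraic curvature tensor `R = R(λ, e, R₀, P, T)` of type `𝔤^{1,𝔥}`. -/
def Rfun (n : ℕ) (lam : ℝ) (ev : EuclideanSpace ℝ (Fin n))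
    (R0 : EuclideanSpace ℝ (Fin n) →ₗ[ℝ] EuclideanSpace ℝ (Fin n) →ₗ[ℝ]
      EuclideanSpace ℝ (Fin n) →ₗ[ℝ] EuclideanSpace ℝ (Fin n))
    (P : EuclideanSpace ℝ (Fin n) →ₗ[ℝ]
      EuclideanSpace ℝ (Fin n) →ₗ[ℝ] EuclideanSpace ℝ (Fin n))
    (T : EuclideanSpace ℝ (Fin n) →ₗ[ℝ] EuclideanSpace ℝ (Fin n))
    (U V : ℝ × EuclideanSpace ℝ (Fin n) × ℝ) :
    (ℝ × EuclideanSpace ℝ (Fin n) × ℝ) → (ℝ × EuclideanSpace ℝ (Fin n) × ℝ) :=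
  simMat n
    ((U.1 * V.2.2 - U.2.2 * V.1) * lam + V.2.2 * ⟪ev, U.2.1⟫ - U.2.2 * ⟪ev, V.2.1⟫)
    (R0 U.2.1 V.2.1 + V.2.2 • P U.2.1 - U.2.2 • P V.2.1)
    ((U.1 * V.2.2 - U.2.2 * V.1) • ev + (P V.2.1 U.2.1 - P U.2.1 V.2.1)
      + V.2.2 • T U.2.1 - U.2.2 • T V.2.1)

def pVec (n : ℕ) : ℝ × EuclideanSpace ℝ (Fin n) × ℝ := (1, 0, 0)
def qVec (n : ℕ) : ℝ × EuclideanSpace ℝ (Fin n) × ℝ := (0, 0, 1)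
/-- The basis vector `Xᵢ` of `E = ℝⁿ`. -/
def xVec (n : ℕ) (i : Fin n) : ℝ × EuclideanSpace ℝ (Fin n) × ℝ :=
  (0, EuclideanSpace.single i (1 : ℝ), 0)

def lorG (n : ℕ) (u v : ℝ × EuclideanSpace ℝ (Fin n) × ℝ) : ℝ :=
  u.1 * v.2.2 + u.2.2 * v.1 + ⟪u.2.1, v.2.1⟫

/-- The Ricci tensor `Ric(U,V) = tr (Z ↦ R(Z,U)V)`, computed via the Witt basis
`p, X₁, …, Xₙ, q` whose `g`-dual basis is `q, X₁, …, Xₙ, p`. -/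
def RicF (n : ℕ) (lam : ℝ) (ev : EuclideanSpace ℝ (Fin n))
    (R0 : EuclideanSpace ℝ (Fin n) →ₗ[ℝ] EuclideanSpace ℝ (Fin n) →ₗ[ℝ]
      EuclideanSpace ℝ (Fin n) →ₗ[ℝ] EuclideanSpace ℝ (Fin n))
    (P : EuclideanSpace ℝ (Fin n) →ₗ[ℝ]
      EuclideanSpace ℝ (Fin n) →ₗ[ℝ] EuclideanSpace ℝ (Fin n))
    (T : EuclideanSpace ℝ (Fin n) →ₗ[ℝ] EuclideanSpace ℝ (Fin n))
    (U V : ℝ × EuclideanSpace ℝ (Fin n) × ℝ) : ℝ :=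
  lorG n (Rfun n lam ev R0 P T (pVec n) U V) (qVec n)
    + (∑ i, lorG n (Rfun n lam ev R0 P T (xVec n i) U V) (xVec n i))
    + lorG n (Rfun n lam ev R0 P T (qVec n) U V) (pVec n)

/-- For the algebraic curvature tensor `R = R(λ,e,R₀,P,T)` of type
`𝔤^{1,𝔥}`, the Ricci tensor `Ric(U,V) = tr(Z ↦ R(Z,U)V)` satisfies `Ric(p,q) = λ`,
`Ric(X,Y) = Ric(R₀)(X,Y)` for `X, Y ∈ E`, `Ric(X,q) = g(X, e − R̃ic(P))` and
`Ric(q,q) = −tr T`. -/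
theorem stmt18 (n : ℕ) (lam : ℝ) (ev : EuclideanSpace ℝ (Fin n))
    (R0 : EuclideanSpace ℝ (Fin n) →ₗ[ℝ] EuclideanSpace ℝ (Fin n) →ₗ[ℝ]
      EuclideanSpace ℝ (Fin n) →ₗ[ℝ] EuclideanSpace ℝ (Fin n))
    (P : EuclideanSpace ℝ (Fin n) →ₗ[ℝ]
      EuclideanSpace ℝ (Fin n) →ₗ[ℝ] EuclideanSpace ℝ (Fin n))
    (T : EuclideanSpace ℝ (Fin n) →ₗ[ℝ] EuclideanSpace ℝ (Fin n))
    (hR0skew : ∀ x y, R0 x y = -R0 y x)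
    (hR0val : ∀ x y z u, ⟪R0 x y z, u⟫ + ⟪z, R0 x y u⟫ = 0)
    (hR0B : ∀ x y z, R0 x y z + R0 y z x + R0 z x y = 0)
    (hPval : ∀ x y z, ⟪P x y, z⟫ + ⟪y, P x z⟫ = 0)
    (hPcyc : ∀ x y z, ⟪P x y, z⟫ + ⟪P y z, x⟫ + ⟪P z x, y⟫ = 0)
    (hT : ∀ x y, ⟪T x, y⟫ = ⟪x, T y⟫) :
    RicF n lam ev R0 P T (pVec n) (qVec n) = lam ∧
    (∀ x y : EuclideanSpace ℝ (Fin n),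
      RicF n lam ev R0 P T (0, x, 0) (0, y, 0)
        = ∑ i, ⟪R0 (EuclideanSpace.single i (1 : ℝ)) x y, EuclideanSpace.single i (1 : ℝ)⟫) ∧
    (∀ x : EuclideanSpace ℝ (Fin n),
      RicF n lam ev R0 P T (0, x, 0) (qVec n)
        = ⟪x, ev - ∑ i, P (EuclideanSpace.single i (1 : ℝ)) (EuclideanSpace.single i (1 : ℝ))⟫) ∧
    RicF n lam ev R0 P T (qVec n) (qVec n)
      = -∑ i, ⟪T (EuclideanSpace.single i (1 : ℝ)), EuclideanSpace.single i (1 : ℝ)⟫ := by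
  refine ⟨?_, ?_, ?_, ?_⟩
  · simp [RicF, Rfun, simMat, lorG, pVec, qVec, xVec, real_inner_comm]
  · intro x y
    simp [RicF, Rfun, simMat, lorG, pVec, qVec, xVec]
  · intro x
    simp only [RicF, Rfun, simMat, lorG, pVec, qVec, xVec]
    have h1 : ∀ i : Fin n, ((P (EuclideanSpace.single i 1)) x) i
        = -⟪x, P (EuclideanSpace.single i 1) (EuclideanSpace.single i 1)⟫ := by
      intro i
      have h := hPval (EuclideanSpace.single i 1) x (EuclideanSpace.single i 1)
      have h' : ⟪(P (EuclideanSpace.single i 1)) x, EuclideanSpace.single i 1⟫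
          = ((P (EuclideanSpace.single i 1)) x) i := by
        simp [EuclideanSpace.inner_single_right]
      linarith
    have h2 : ∀ i : Fin n, ((P x) (EuclideanSpace.single i 1)) i = 0 := by
      intro i
      have h := hPval x (EuclideanSpace.single i 1) (EuclideanSpace.single i 1)
      have h' : ⟪(P x) (EuclideanSpace.single i 1), EuclideanSpace.single i 1⟫
          = ((P x) (EuclideanSpace.single i 1)) i := by
        simp [EuclideanSpace.inner_single_right]
      have h'' : ⟪EuclideanSpace.single i (1:ℝ), (P x) (EuclideanSpace.single i 1)⟫
          = ⟪(P x) (EuclideanSpace.single i 1), EuclideanSpace.single i (1:ℝ)⟫ :=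
        real_inner_comm _ _
      linarith
    have hsum : ∀ i : Fin n,
        (∑ j, (P (EuclideanSpace.single j 1)) (EuclideanSpace.single j 1)) i
          = ∑ j, ((P (EuclideanSpace.single j 1)) (EuclideanSpace.single j 1)) i := by
      intro i
      rw [WithLp.ofLp_sum]
      exact Finset.sum_apply i _ _
    simp [h1, h2, PiLp.inner_apply, hsum, Finset.mul_sum, mul_sub,
      Finset.sum_sub_distrib, mul_comm]
    rw [Finset.sum_comm]
    ring
  · simp [RicF, Rfun, simMat, lorG, pVec, qVec, xVec]
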